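/- Let Γ₁, Γ₂, Γ₃ be nonzero real numbers with Γ₁ + Γ₂ + Γ₃ = 0. Then it is impossible that both Γ₁/Γ₂ − Γ₂/Γ₁ = Γ₂/Γ₃ − Γ₃/Γ₂ and Γ₂/Γ₃ − Γ₃/Γ₂ = Γ₃/Γ₁ − Γ₁/Γ₃ hold. -/

import Mathlib

/-- The concluding contradiction in Propositions 4.7 and 4.8: the chain of equalities
Γ₁/Γ₂ − Γ₂/Γ₁ = Γ₂/Γ₃ − Γ₃/Γ₂ = Γ₃/Γ₁ − Γ₁/Γ₃ is impossible when Γ₁ + Γ₂ + Γ₃ = 0. -/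
theorem triangle_ratio_contradiction
    (Γ₁ Γ₂ Γ₃ : ℝ) (h1 : Γ₁ ≠ 0) (h2 : Γ₂ ≠ 0) (h3 : Γ₃ ≠ 0)
    (hsum : Γ₁ + Γ₂ + Γ₃ = 0) :
    ¬ (Γ₁ / Γ₂ - Γ₂ / Γ₁ = Γ₂ / Γ₃ - Γ₃ / Γ₂ ∧
       Γ₂ / Γ₃ - Γ₃ / Γ₂ = Γ₃ / Γ₁ - Γ₁ / Γ₃) := by
  rintro ⟨ha, -⟩
  have hc : Γ₃ = -(Γ₁ + Γ₂) := by linarith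
  subst hc
  have hne : -Γ₂ + -Γ₁ ≠ 0 := by
    intro h; exact h3 (by linarith)
  field_simp [hne, show Γ₁ + Γ₂ ≠ 0 from fun h => h3 (by linarith)] at ha
  have hb2 : 0 < Γ₂ ^ 2 := by positivity
  have hq : 0 < Γ₁ ^ 2 + Γ₁ * Γ₂ + Γ₂ ^ 2 := by nlinarith [sq_nonneg (Γ₁ + Γ₂ / 2)]
  nlinarith [mul_pos hb2 hq]
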